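/- Let X ⊆ ℝ^{d_x} be a Borel set carrying a probability measure π₀, let E ⊆ ℝ^{d_e} be a Borel latent space, and let Θ ⊆ ℝ^{p} be a convex set. Let g₀ : X × E → ℝ^{k₀} and g̃ : X × E → ℝ^{d_C} be bounded measurable and A : X → ℝ^{p × d_C} be bounded measurable, and for θ ∈ Θ define g(x, e; θ) = (g₀(x,e)ᵀ, (g̃(x,e) − A(x)ᵀθ)ᵀ)ᵀ. Define the identified set Θ₀ = {θ ∈ Θ : there exists a sequence of Markov kernels μ_k from X to E with ‖∫_X ∫_E g(x,e;θ) dμ_k(e|x) dπ₀(x)‖ → 0 as k → ∞}. Then Θ₀ is convex. -/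

import Mathlib

open MeasureTheory ProbabilityTheory Filter Topology
open scoped ENNReal

noncomputable section

/-- The stacked moment g(x,e;θ) = (g₀(x,e)ᵀ, (g̃(x,e) − A(x)ᵀθ)ᵀ)ᵀ ∈ ℝ^{k₀ + d_C}. -/
def gStack {k₀ dC p : ℕ} {X E : Type*}
    (g₀ : X → E → EuclideanSpace ℝ (Fin k₀))
    (gt : X → E → EuclideanSpace ℝ (Fin dC))
    (A : X → Matrix (Fin p) (Fin dC) ℝ)
    (θ : EuclideanSpace ℝ (Fin p)) (x : X) (e : E) :
    EuclideanSpace ℝ (Fin (k₀ + dC)) :=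
  (WithLp.equiv 2 (Fin (k₀ + dC) → ℝ)).symm
    (Fin.append (fun i => g₀ x e i) (fun j => gt x e j - ∑ i, A x i j * θ i))

/-- The θ-dependent, e-independent part of the stacked moment. -/
def cvec {k₀ dC p : ℕ} {X : Type*} (A : X → Matrix (Fin p) (Fin dC) ℝ)
    (θ : EuclideanSpace ℝ (Fin p)) (x : X) : EuclideanSpace ℝ (Fin (k₀ + dC)) :=
  (WithLp.equiv 2 (Fin (k₀ + dC) → ℝ)).symm
    (Fin.append (fun _ => (0:ℝ)) (fun j => ∑ i, A x i j * θ i))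

lemma gStack_sub {k₀ dC p : ℕ} {X E : Type*}
    (g₀ : X → E → EuclideanSpace ℝ (Fin k₀))
    (gt : X → E → EuclideanSpace ℝ (Fin dC))
    (A : X → Matrix (Fin p) (Fin dC) ℝ)
    (θ : EuclideanSpace ℝ (Fin p)) (x : X) (e : E) :
    gStack g₀ gt A θ x e = gStack g₀ gt A 0 x e - cvec A θ x := by
  ext j
  simp only [gStack, cvec, WithLp.equiv_symm_apply, PiLp.toLp_apply, PiLp.sub_apply]
  induction j using Fin.addCases with
  | left i => simp [Fin.append_left]
  | right i => simp [Fin.append_right]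

lemma cvec_combo {k₀ dC p : ℕ} {X : Type*} (A : X → Matrix (Fin p) (Fin dC) ℝ)
    (θ₁ θ₂ : EuclideanSpace ℝ (Fin p)) (a b : ℝ) (x : X) :
    (cvec A (a • θ₁ + b • θ₂) x : EuclideanSpace ℝ (Fin (k₀ + dC)))
      = a • cvec A θ₁ x + b • cvec A θ₂ x := by
  ext j
  simp only [cvec, WithLp.equiv_symm_apply, PiLp.toLp_apply, PiLp.add_apply, PiLp.smul_apply, smul_eq_mul]
  induction j using Fin.addCases with
  | left i => simp [Fin.append_left]
  | right i =>
    simp only [Fin.append_right]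
    rw [Finset.mul_sum, Finset.mul_sum, ← Finset.sum_add_distrib]
    exact Finset.sum_congr rfl fun i _ => by ring

lemma coord_le_norm {n : ℕ} (v : EuclideanSpace ℝ (Fin n)) (i : Fin n) : |v i| ≤ ‖v‖ := by
  rw [EuclideanSpace.norm_eq]
  have : |v i| = Real.sqrt (‖v i‖ ^ 2) := by
    rw [Real.sqrt_sq_eq_abs, Real.norm_eq_abs, abs_abs]
  rw [this]
  apply Real.sqrt_le_sqrt
  exact Finset.single_le_sum (f := fun j => ‖v j‖ ^ 2) (fun j _ => sq_nonneg _) (Finset.mem_univ i)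

lemma norm_le_sqrt_card {n : ℕ} (v : EuclideanSpace ℝ (Fin n)) (M : ℝ) (hM : 0 ≤ M)
    (h : ∀ i, |v i| ≤ M) : ‖v‖ ≤ Real.sqrt n * M := by
  rw [EuclideanSpace.norm_eq]
  have h1 : ∑ i, ‖v i‖ ^ 2 ≤ (n : ℝ) * M ^ 2 := by
    calc ∑ i, ‖v i‖ ^ 2 ≤ ∑ _i : Fin n, M ^ 2 := by
          apply Finset.sum_le_sum
          intro i _
          have := h i
          rw [Real.norm_eq_abs]
          nlinarith [abs_nonneg (v i)]
      _ = (n : ℝ) * M ^ 2 := by simp [mul_comm]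
  calc Real.sqrt (∑ i, ‖v i‖ ^ 2) ≤ Real.sqrt ((n : ℝ) * M ^ 2) := Real.sqrt_le_sqrt h1
    _ = Real.sqrt n * M := by
        rw [Real.sqrt_mul (by positivity), Real.sqrt_sq hM]

/-- The convex combination of two kernels with ℝ≥0∞ weights. -/
def cSmulAdd {X E : Type*} [MeasurableSpace X] [MeasurableSpace E]
    (a b : ℝ≥0∞) (κ η : Kernel X E) : Kernel X E :=
  ⟨fun x => a • κ x + b • η x, by
    apply Measure.measurable_of_measurable_coe
    intro s hs
    simp only [Measure.coe_add, Measure.coe_smul, Pi.add_apply, Pi.smul_apply, smul_eq_mul]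
    exact (measurable_const.mul (κ.measurable_coe hs)).add
      (measurable_const.mul (η.measurable_coe hs))⟩

lemma cSmulAdd_apply {X E : Type*} [MeasurableSpace X] [MeasurableSpace E]
    (a b : ℝ≥0∞) (κ η : Kernel X E) (x : X) : cSmulAdd a b κ η x = a • κ x + b • η x := rfl

lemma cSmulAdd_isMarkov {X E : Type*} [MeasurableSpace X] [MeasurableSpace E]
    (a b : ℝ) (ha : 0 ≤ a) (hb : 0 ≤ b) (hab : a + b = 1) (κ η : Kernel X E)
    (hκ : IsMarkovKernel κ) (hη : IsMarkovKernel η) :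
    IsMarkovKernel (cSmulAdd (ENNReal.ofReal a) (ENNReal.ofReal b) κ η) := by
  constructor
  intro x
  constructor
  rw [cSmulAdd_apply]
  have h1 := hκ.isProbabilityMeasure x
  have h2 := hη.isProbabilityMeasure x
  simp [← ENNReal.ofReal_add ha hb, hab, h1.measure_univ, h2.measure_univ]

/-- the identified set
Θ₀ = {θ ∈ Θ : ∃ Markov kernels μ_k with ‖∫∫ g(x,e;θ) dμ_k dπ₀‖ → 0}
is convex whenever Θ is convex and the counterfactual moment is additively separable and
affine in θ. -/
theorem stmt_12 {dx de p k₀ dC : ℕ}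
    (X : Set (EuclideanSpace ℝ (Fin dx))) (hX : MeasurableSet X)
    (E : Set (EuclideanSpace ℝ (Fin de))) (hE : MeasurableSet E)
    (π₀ : Measure ↥X) [IsProbabilityMeasure π₀]
    (Θ : Set (EuclideanSpace ℝ (Fin p))) (hΘ : Convex ℝ Θ)
    (g₀ : ↥X → ↥E → EuclideanSpace ℝ (Fin k₀))
    (hg₀meas : Measurable (Function.uncurry g₀)) (hg₀bdd : ∃ C : ℝ, ∀ x e, ‖g₀ x e‖ ≤ C)
    (gt : ↥X → ↥E → EuclideanSpace ℝ (Fin dC))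
    (hgtmeas : Measurable (Function.uncurry gt)) (hgtbdd : ∃ C : ℝ, ∀ x e, ‖gt x e‖ ≤ C)
    (A : ↥X → Matrix (Fin p) (Fin dC) ℝ)
    (hAmeas : Measurable (fun x i j => A x i j : ↥X → Fin p → Fin dC → ℝ)) (hAbdd : ∃ C : ℝ, ∀ x i j, |A x i j| ≤ C) :
    Convex ℝ {θ ∈ Θ | ∃ μ : ℕ → Kernel ↥X ↥E, (∀ k, IsMarkovKernel (μ k)) ∧
        Tendsto (fun k => ‖∫ x, ∫ e, gStack g₀ gt A θ x e ∂((μ k) x) ∂π₀‖)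
          atTop (𝓝 0)} := by
  obtain ⟨C₀, hC₀⟩ := hg₀bdd
  obtain ⟨C₁, hC₁⟩ := hgtbdd
  obtain ⟨C₂, hC₂⟩ := hAbdd
  -- measurability of the uncurried stacked moment
  have hmeas : ∀ θ : EuclideanSpace ℝ (Fin p),
      Measurable (fun q : ↥X × ↥E => gStack g₀ gt A θ q.1 q.2) := by
    intro θ
    refine (MeasurableEquiv.toLp 2 (Fin (k₀ + dC) → ℝ)).measurable.comp
      (f := fun q : ↥X × ↥E => Fin.append (fun i => g₀ q.1 q.2 i)
        (fun j => gt q.1 q.2 j - ∑ i, A q.1 i j * θ i)) (measurable_pi_lambda _ ?_)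
    intro j
    induction j using Fin.addCases with
    | left i =>
      simp only [Fin.append_left]
      exact (measurable_pi_apply i).comp ((MeasurableEquiv.toLp 2 _).symm.measurable.comp hg₀meas)
    | right i =>
      simp only [Fin.append_right]
      apply Measurable.sub
      · exact (measurable_pi_apply i).comp ((MeasurableEquiv.toLp 2 _).symm.measurable.comp hgtmeas)
      · apply Finset.measurable_sum
        intro l _
        exact (((measurable_pi_apply i).comp
          ((measurable_pi_apply l).comp (hAmeas.comp measurable_fst)))).mul_const (θ l)
  -- uniform bound
  set M : EuclideanSpace ℝ (Fin p) → ℝ := fun θ =>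
    Real.sqrt (((k₀ + dC : ℕ) : ℝ)) * (|C₀| + |C₁| + ∑ i, |C₂| * |θ i|) with hM
  have hbd : ∀ (θ : EuclideanSpace ℝ (Fin p)) x e, ‖gStack g₀ gt A θ x e‖ ≤ M θ := by
    intro θ x e
    have hnn : (0:ℝ) ≤ |C₀| + |C₁| + ∑ i, |C₂| * |θ i| := by positivity
    apply norm_le_sqrt_card _ _ hnn
    intro j
    simp only [gStack, WithLp.equiv_symm_apply, PiLp.toLp_apply]
    induction j using Fin.addCases with
    | left i =>
      rw [Fin.append_left]
      have h1 : |g₀ x e i| ≤ ‖g₀ x e‖ := coord_le_norm _ _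
      have h2 : ‖g₀ x e‖ ≤ C₀ := hC₀ x e
      have h3 : (0:ℝ) ≤ ∑ i, |C₂| * |θ i| := by positivity
      calc |g₀ x e i| ≤ C₀ := h1.trans h2
        _ ≤ |C₀| := le_abs_self _
        _ ≤ _ := by nlinarith [abs_nonneg C₁]
    | right i =>
      rw [Fin.append_right]
      have h1 : |gt x e i| ≤ ‖gt x e‖ := coord_le_norm _ _
      have h2 : |∑ l, A x l i * θ l| ≤ ∑ l, |C₂| * |θ l| := by
        calc |∑ l, A x l i * θ l| ≤ ∑ l, |A x l i * θ l| := Finset.abs_sum_le_sum_abs _ _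
          _ ≤ ∑ l, |C₂| * |θ l| := by
              apply Finset.sum_le_sum
              intro l _
              rw [abs_mul]
              exact mul_le_mul_of_nonneg_right ((hC₂ x l i).trans (le_abs_self _))
                (abs_nonneg _)
      calc |gt x e i - ∑ l, A x l i * θ l| ≤ |gt x e i| + |∑ l, A x l i * θ l| :=
            abs_sub _ _
        _ ≤ C₁ + ∑ l, |C₂| * |θ l| := add_le_add (h1.trans (hC₁ x e)) h2
        _ ≤ _ := by nlinarith [abs_nonneg C₀, le_abs_self C₁]
  -- integrability of the stacked moment over any finite measure on E
  have hint : ∀ (θ : EuclideanSpace ℝ (Fin p)) (x : ↥X) (κ : Measure ↥E),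
      IsFiniteMeasure κ → Integrable (fun e => gStack g₀ gt A θ x e) κ := by
    intro θ x κ hκ
    have hm : Measurable (fun e => gStack g₀ gt A θ x e) :=
      (hmeas θ).comp (measurable_const.prodMk measurable_id)
    exact (integrable_const (M θ)).mono' hm.aestronglyMeasurable
      (Eventually.of_forall fun e => hbd θ x e)
  -- inner integral formula for probability measures
  have hinner : ∀ (θ : EuclideanSpace ℝ (Fin p)) (x : ↥X) (κ : Measure ↥E),
      IsProbabilityMeasure κ →
      ∫ e, gStack g₀ gt A θ x e ∂κ
        = (∫ e, gStack g₀ gt A 0 x e ∂κ) - cvec A θ x := by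
    intro θ x κ hκ
    simp_rw [gStack_sub g₀ gt A θ]
    rw [integral_sub (hint 0 x κ (by haveI := hκ; infer_instance)) (integrable_const _), integral_const]
    simp
  -- convexity proof
  rintro θ₁ ⟨hθ₁Θ, μ, hμM, hμT⟩ θ₂ ⟨hθ₂Θ, ν, hνM, hνT⟩ a b ha hb hab
  refine ⟨hΘ hθ₁Θ hθ₂Θ ha hb hab,
    fun k => cSmulAdd (ENNReal.ofReal a) (ENNReal.ofReal b) (μ k) (ν k),
    fun k => cSmulAdd_isMarkov a b ha hb hab _ _ (hμM k) (hνM k), ?_⟩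
  -- pointwise-in-x identity for the inner integral against the combined kernel
  have hb1 : a = 1 - b := by linarith
  have hptwise : ∀ k x,
      ∫ e, gStack g₀ gt A (a • θ₁ + b • θ₂) x e
        ∂((cSmulAdd (ENNReal.ofReal a) (ENNReal.ofReal b) (μ k) (ν k)) x)
      = a • (∫ e, gStack g₀ gt A θ₁ x e ∂((μ k) x))
        + b • (∫ e, gStack g₀ gt A θ₂ x e ∂((ν k) x)) := by
    intro k x
    have hμP : IsProbabilityMeasure ((μ k) x) := (hμM k).isProbabilityMeasure x
    have hνP : IsProbabilityMeasure ((ν k) x) := (hνM k).isProbabilityMeasure x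
    rw [cSmulAdd_apply]
    rw [integral_add_measure
      ((hint _ x _ (by haveI := hμP; infer_instance)).smul_measure ENNReal.ofReal_ne_top)
      ((hint _ x _ (by haveI := hνP; infer_instance)).smul_measure ENNReal.ofReal_ne_top)]
    rw [integral_smul_measure, integral_smul_measure,
      ENNReal.toReal_ofReal ha, ENNReal.toReal_ofReal hb]
    rw [hinner _ x _ hμP, hinner _ x _ hνP, hinner θ₁ x _ hμP, hinner θ₂ x _ hνP,
      cvec_combo]
    rw [hb1]
    module
  -- integrability over π₀ of the inner integrals
  have houterInt : ∀ (θ : EuclideanSpace ℝ (Fin p)) (κ : Kernel ↥X ↥E),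
      IsMarkovKernel κ →
      Integrable (fun x => ∫ e, gStack g₀ gt A θ x e ∂(κ x)) π₀ := by
    intro θ κ hκ
    haveI := hκ
    have hsm : StronglyMeasurable fun x => ∫ e, gStack g₀ gt A θ x e ∂(κ x) :=
      (hmeas θ).stronglyMeasurable.integral_kernel_prod_right'
    apply (integrable_const (M θ)).mono' hsm.aestronglyMeasurable
    apply Eventually.of_forall
    intro x
    have hP : IsProbabilityMeasure (κ x) := hκ.isProbabilityMeasure x
    calc ‖∫ e, gStack g₀ gt A θ x e ∂(κ x)‖
        ≤ M θ * ((κ x) Set.univ).toReal :=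
          norm_integral_le_of_norm_le_const (Eventually.of_forall fun e => hbd θ x e)
      _ = M θ := by simp [hP.measure_univ]
  -- the outer integral splits
  have houter : ∀ k,
      ∫ x, ∫ e, gStack g₀ gt A (a • θ₁ + b • θ₂) x e
        ∂((cSmulAdd (ENNReal.ofReal a) (ENNReal.ofReal b) (μ k) (ν k)) x) ∂π₀
      = a • (∫ x, ∫ e, gStack g₀ gt A θ₁ x e ∂((μ k) x) ∂π₀)
        + b • (∫ x, ∫ e, gStack g₀ gt A θ₂ x e ∂((ν k) x) ∂π₀) := by
    intro k
    rw [show (fun x => ∫ e, gStack g₀ gt A (a • θ₁ + b • θ₂) x e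
        ∂((cSmulAdd (ENNReal.ofReal a) (ENNReal.ofReal b) (μ k) (ν k)) x))
      = fun x => a • (∫ e, gStack g₀ gt A θ₁ x e ∂((μ k) x))
        + b • (∫ e, gStack g₀ gt A θ₂ x e ∂((ν k) x)) from funext (hptwise k)]
    have h1 : Integrable (fun x => a • (∫ e, gStack g₀ gt A θ₁ x e ∂((μ k) x))) π₀ :=
      (houterInt θ₁ (μ k) (hμM k)).smul a
    have h2 : Integrable (fun x => b • (∫ e, gStack g₀ gt A θ₂ x e ∂((ν k) x))) π₀ :=
      (houterInt θ₂ (ν k) (hνM k)).smul b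
    rw [integral_add h1 h2, integral_smul, integral_smul]
  -- conclude by the squeeze theorem
  have hsq : ∀ k,
      ‖∫ x, ∫ e, gStack g₀ gt A (a • θ₁ + b • θ₂) x e
        ∂((cSmulAdd (ENNReal.ofReal a) (ENNReal.ofReal b) (μ k) (ν k)) x) ∂π₀‖
      ≤ a * ‖∫ x, ∫ e, gStack g₀ gt A θ₁ x e ∂((μ k) x) ∂π₀‖
        + b * ‖∫ x, ∫ e, gStack g₀ gt A θ₂ x e ∂((ν k) x) ∂π₀‖ := by
    intro k
    rw [houter k]
    calc ‖_ + _‖ ≤ ‖a • (∫ x, ∫ e, gStack g₀ gt A θ₁ x e ∂((μ k) x) ∂π₀)‖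
          + ‖b • (∫ x, ∫ e, gStack g₀ gt A θ₂ x e ∂((ν k) x) ∂π₀)‖ := norm_add_le _ _
      _ = _ := by
          rw [norm_smul, norm_smul, Real.norm_eq_abs, Real.norm_eq_abs,
            abs_of_nonneg ha, abs_of_nonneg hb]
  have hlim : Tendsto (fun k =>
      a * ‖∫ x, ∫ e, gStack g₀ gt A θ₁ x e ∂((μ k) x) ∂π₀‖
        + b * ‖∫ x, ∫ e, gStack g₀ gt A θ₂ x e ∂((ν k) x) ∂π₀‖) atTop (𝓝 0) := by
    have := (hμT.const_mul a).add (hνT.const_mul b)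
    simpa using this
  exact squeeze_zero (fun k => norm_nonneg _) hsq hlim

end
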